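/- Let N, n ≥ 1 and m_1, …, m_N ≥ 1. Let A ∈ ℝ^{n×n}, B^j ∈ ℝ^{n×m_j}, K^j, K̃^j ∈ ℝ^{m_j×n} with ‖K̃^j − K^j‖₂ ≤ ε for every j, and let R^{ij} ∈ ℝ^{m_j×m_j} be given for a fixed i and all j ∈ {1,…,N}. Set F = A + Σ_{j=1}^N B^j K^j, F̃ = A + Σ_{j=1}^N B^j K̃^j, λ := ‖F‖₂, b := Σ_{j=1}^N ‖B^j‖₂, and suppose λ + bε < 1. Let M ∈ ℝ satisfy (t−1)(λ+bε)^{t−2} ≤ M for every integer t ≥ 2. Then for every integer t ≥ 1: Σ_{j=1}^N ‖(K̃^j F̃^{t−1})^⊤ R^{ij} (K̃^j F̃^{t−1}) − (K^j F^{t−1})^⊤ R^{ij} (K^j F^{t−1})‖₂ ≤ ε² Σ_{j=1}^N ‖R^{ij}‖₂ (‖K^j‖₂ b M + 1) + 2ε Σ_{j=1}^N ‖R^{ij}‖₂ ‖K^j‖₂ (‖K^j‖₂ b M + 1). -/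
import Mathlib


open Matrix BigOperators

/-- The spectral (operator 2-)norm of a real matrix. -/
noncomputable def sn {r c : ℕ} (A : Matrix (Fin r) (Fin c) ℝ) : ℝ :=
  ‖LinearMap.toContinuousLinearMap (Matrix.toEuclideanLin A)‖

open scoped Matrix.Norms.L2Operator

lemma sn_eq {r c : ℕ} (A : Matrix (Fin r) (Fin c) ℝ) : sn A = ‖A‖ := rfl

lemma sn_nonneg {r c : ℕ} (A : Matrix (Fin r) (Fin c) ℝ) : 0 ≤ sn A := by
  rw [sn_eq]; exact norm_nonneg A

lemma sn_mul_le {r c d : ℕ} (A : Matrix (Fin r) (Fin c) ℝ) (B : Matrix (Fin c) (Fin d) ℝ) :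
    sn (A * B) ≤ sn A * sn B := by
  simp only [sn_eq]; exact Matrix.l2_opNorm_mul A B

lemma sn_transpose {r c : ℕ} (A : Matrix (Fin r) (Fin c) ℝ) : sn Aᵀ = sn A := by
  simp only [sn_eq]
  rw [← Matrix.conjTranspose_eq_transpose_of_trivial]
  exact Matrix.l2_opNorm_conjTranspose A

lemma sn_add_le {r c : ℕ} (A B : Matrix (Fin r) (Fin c) ℝ) : sn (A + B) ≤ sn A + sn B := by
  simp only [sn_eq]; exact norm_add_le A B

lemma sn_sum_le {r c : ℕ} {N : ℕ} (f : Fin N → Matrix (Fin r) (Fin c) ℝ) :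
    sn (∑ j, f j) ≤ ∑ j, sn (f j) := by
  simp only [sn_eq]; exact norm_sum_le _ _

lemma sn_zero {r c : ℕ} : sn (0 : Matrix (Fin r) (Fin c) ℝ) = 0 := by
  rw [sn_eq]; exact norm_zero

lemma sn_mul_pow_le {r c : ℕ} (C : Matrix (Fin r) (Fin c) ℝ) (X : Matrix (Fin c) (Fin c) ℝ)
    {ρ : ℝ} (hX : sn X ≤ ρ) (hρ : 0 ≤ ρ) : ∀ s : ℕ, sn (C * X ^ s) ≤ sn C * ρ ^ s := by
  intro s
  induction s with
  | zero => simp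
  | succ s ih =>
    have h1 : C * X ^ (s + 1) = (C * X ^ s) * X := by rw [pow_succ, ← Matrix.mul_assoc]
    rw [h1, pow_succ]
    calc sn ((C * X ^ s) * X) ≤ sn (C * X ^ s) * sn X := sn_mul_le _ _
      _ ≤ (sn C * ρ ^ s) * ρ :=
        mul_le_mul ih hX (sn_nonneg _) (mul_nonneg (sn_nonneg _) (pow_nonneg hρ _))
      _ = sn C * (ρ ^ s * ρ) := by ring

lemma sn_pow_sub_pow_le {c : ℕ} (X Y : Matrix (Fin c) (Fin c) ℝ) {ρ δ : ℝ}
    (hX : sn X ≤ ρ) (hY : sn Y ≤ ρ) (hρ : 0 ≤ ρ) (hd : sn (X - Y) ≤ δ) :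
    ∀ s : ℕ, sn (X ^ (s + 1) - Y ^ (s + 1)) ≤ (s + 1) * ρ ^ s * δ := by
  have hδ : 0 ≤ δ := le_trans (sn_nonneg _) hd
  intro s
  induction s with
  | zero => simpa using hd
  | succ s ih =>
    have h1 : X ^ (s + 2) - Y ^ (s + 2) =
        X * (X ^ (s + 1) - Y ^ (s + 1)) + (X - Y) * Y ^ (s + 1) := by
      simp only [Matrix.mul_sub, Matrix.sub_mul]
      rw [← pow_succ', ← pow_succ']
      abel
    rw [h1]
    have h2 : sn (X * (X ^ (s + 1) - Y ^ (s + 1))) ≤ ρ * ((s + 1) * ρ ^ s * δ) :=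
      le_trans (sn_mul_le _ _)
        (mul_le_mul hX ih (sn_nonneg _) hρ)
    have h3 : sn ((X - Y) * Y ^ (s + 1)) ≤ δ * ρ ^ (s + 1) :=
      le_trans (sn_mul_pow_le _ _ hY hρ _) (by
        exact mul_le_mul_of_nonneg_right hd (pow_nonneg hρ _))
    calc sn _ ≤ sn (X * (X ^ (s + 1) - Y ^ (s + 1))) + sn ((X - Y) * Y ^ (s + 1)) :=
        sn_add_le _ _
      _ ≤ ρ * ((s + 1) * ρ ^ s * δ) + δ * ρ ^ (s + 1) := add_le_add h2 h3
      _ = ((s + 1 : ℕ) + 1) * ρ ^ (s + 1) * δ := by push_cast; ring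
set_option maxHeartbeats 1000000 in
/-- control-cost perturbation bound `G_{i2}(ε)`: with
`F = A + Σⱼ Bʲ Kʲ`, `F̃ = A + Σⱼ Bʲ K̃ʲ`, `‖K̃ʲ − Kʲ‖₂ ≤ ε`, `b = Σⱼ ‖Bʲ‖₂`,
`λ = ‖F‖₂`, `λ + bε < 1` and `M ≥ (t−1)(λ+bε)^{t−2}` for all `t ≥ 2`, one has, for all
`t ≥ 1`,
`Σⱼ ‖(K̃ʲF̃^{t−1})ᵀ Rⁱʲ (K̃ʲF̃^{t−1}) − (KʲF^{t−1})ᵀ Rⁱʲ (KʲF^{t−1})‖₂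
  ≤ ε² Σⱼ ‖Rⁱʲ‖₂(‖Kʲ‖₂ b M + 1) + 2ε Σⱼ ‖Rⁱʲ‖₂‖Kʲ‖₂(‖Kʲ‖₂ b M + 1)`. -/
theorem stmt13 {N n : ℕ} {m : Fin N → ℕ}
    (hN : 0 < N) (hn : 0 < n) (hm : ∀ j, 0 < m j)
    (A : Matrix (Fin n) (Fin n) ℝ)
    (B : (j : Fin N) → Matrix (Fin n) (Fin (m j)) ℝ)
    (K Ktil : (j : Fin N) → Matrix (Fin (m j)) (Fin n) ℝ)
    (Rij : (j : Fin N) → Matrix (Fin (m j)) (Fin (m j)) ℝ)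
    (ε : ℝ) (hε : 0 ≤ ε) (hK : ∀ j, sn (Ktil j - K j) ≤ ε)
    (hlt : sn (A + ∑ j, B j * K j) + (∑ j, sn (B j)) * ε < 1)
    (M : ℝ)
    (hM : ∀ t : ℕ, 2 ≤ t →
      ((t : ℝ) - 1) * (sn (A + ∑ j, B j * K j) + (∑ j, sn (B j)) * ε) ^ (t - 2) ≤ M) :
    ∀ t : ℕ, 1 ≤ t →
      ∑ j, sn ((Ktil j * (A + ∑ j', B j' * Ktil j') ^ (t - 1))ᵀ * Rij j *
            (Ktil j * (A + ∑ j', B j' * Ktil j') ^ (t - 1))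
          - (K j * (A + ∑ j', B j' * K j') ^ (t - 1))ᵀ * Rij j *
            (K j * (A + ∑ j', B j' * K j') ^ (t - 1)))
        ≤ ε ^ 2 * ∑ j, sn (Rij j) * (sn (K j) * (∑ j', sn (B j')) * M + 1)
          + 2 * ε * ∑ j, sn (Rij j) * sn (K j) * (sn (K j) * (∑ j', sn (B j')) * M + 1) := by
  set F : Matrix (Fin n) (Fin n) ℝ := A + ∑ j, B j * K j with hF
  set Ft : Matrix (Fin n) (Fin n) ℝ := A + ∑ j, B j * Ktil j with hFt
  set b : ℝ := ∑ j, sn (B j) with hb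
  set ρ : ℝ := sn F + b * ε with hρdef
  have hb0 : 0 ≤ b := Finset.sum_nonneg fun j _ => sn_nonneg _
  have hρ0 : 0 ≤ ρ := add_nonneg (sn_nonneg _) (mul_nonneg hb0 hε)
  have hρ1 : ρ ≤ 1 := hlt.le
  have hM1 : 1 ≤ M := by
    have h := hM 2 (le_refl 2)
    norm_num at h
    exact h
  -- sn Ft ≤ ρ and sn (Ft - F) ≤ b * ε
  have hdiff : Ft - F = ∑ j, B j * (Ktil j - K j) := by
    rw [hFt, hF]
    have : ∀ j ∈ Finset.univ, B j * (Ktil j - K j) = B j * Ktil j - B j * K j :=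
      fun j _ => Matrix.mul_sub _ _ _
    rw [Finset.sum_congr rfl this, Finset.sum_sub_distrib]
    abel
  have hdn : sn (Ft - F) ≤ b * ε := by
    rw [hdiff]
    calc sn (∑ j, B j * (Ktil j - K j)) ≤ ∑ j, sn (B j * (Ktil j - K j)) := sn_sum_le _
      _ ≤ ∑ j, sn (B j) * ε := Finset.sum_le_sum fun j _ =>
          le_trans (sn_mul_le _ _) (mul_le_mul_of_nonneg_left (hK j) (sn_nonneg _))
      _ = b * ε := by rw [hb, Finset.sum_mul]
  have hFtn : sn Ft ≤ ρ := by
    have : Ft = F + (Ft - F) := by abel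
    rw [this]
    exact le_trans (sn_add_le _ _) (add_le_add le_rfl hdn)
  have hFn : sn F ≤ ρ := le_add_of_nonneg_right (mul_nonneg hb0 hε)
  intro t ht
  obtain ⟨s, rfl⟩ : ∃ s, t = s + 1 := ⟨t - 1, (Nat.succ_pred_eq_of_pos ht).symm⟩
  simp only [Nat.add_sub_cancel]
  -- bound on sn (Ft^s - F^s)
  have hpow : sn (Ft ^ s - F ^ s) ≤ M * (b * ε) := by
    cases s with
    | zero => simp [sn_zero]; positivity
    | succ s =>
      have h1 := sn_pow_sub_pow_le Ft F hFtn hFn hρ0 hdn s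
      have h2 : ((s : ℝ) + 1) * ρ ^ s ≤ M := by
        have h := hM (s + 2) (by omega)
        have he : s + 2 - 2 = s := by omega
        rw [he] at h
        have hc : ((s + 2 : ℕ) : ℝ) - 1 = (s : ℝ) + 1 := by push_cast; ring
        rw [hc] at h
        exact h
      calc sn (Ft ^ (s + 1) - F ^ (s + 1)) ≤ ((s : ℝ) + 1) * ρ ^ s * (b * ε) := h1
        _ ≤ M * (b * ε) := mul_le_mul_of_nonneg_right h2 (mul_nonneg hb0 hε)
  have hρs : ρ ^ s ≤ 1 := pow_le_one₀ hρ0 hρ1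
  -- per-j bound
  have key : ∀ j : Fin N,
      sn ((Ktil j * Ft ^ s)ᵀ * Rij j * (Ktil j * Ft ^ s)
        - (K j * F ^ s)ᵀ * Rij j * (K j * F ^ s))
      ≤ ε ^ 2 * (sn (Rij j) * (sn (K j) * b * M + 1))
        + 2 * ε * (sn (Rij j) * sn (K j) * (sn (K j) * b * M + 1)) := by
    intro j
    set X := Ktil j * Ft ^ s with hX
    set Y := K j * F ^ s with hY
    set D := X - Y with hD
    set k := sn (K j) with hk
    set r := sn (Rij j) with hr
    have hk0 : 0 ≤ k := sn_nonneg _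
    have hr0 : 0 ≤ r := sn_nonneg _
    set c : ℝ := k * b * M + 1 with hc
    have hc0 : 0 ≤ c := by positivity
    -- sn D ≤ ε * c
    have hDsplit : D = (Ktil j - K j) * Ft ^ s + K j * (Ft ^ s - F ^ s) := by
      rw [hD, hX, hY, Matrix.sub_mul, Matrix.mul_sub]
      abel
    have hDn : sn D ≤ ε * c := by
      rw [hDsplit]
      have h1 : sn ((Ktil j - K j) * Ft ^ s) ≤ ε :=
        le_trans (sn_mul_pow_le _ _ hFtn hρ0 s)
          (by calc sn (Ktil j - K j) * ρ ^ s ≤ ε * 1 :=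
                mul_le_mul (hK j) hρs (pow_nonneg hρ0 _) hε
              _ = ε := mul_one ε)
      have h2 : sn (K j * (Ft ^ s - F ^ s)) ≤ k * (M * (b * ε)) :=
        le_trans (sn_mul_le _ _) (mul_le_mul_of_nonneg_left hpow hk0)
      calc sn _ ≤ ε + k * (M * (b * ε)) := le_trans (sn_add_le _ _) (add_le_add h1 h2)
        _ = ε * c := by rw [hc]; ring
    have hXn : sn X ≤ k + ε := by
      refine le_trans (sn_mul_pow_le _ _ hFtn hρ0 s) ?_
      have hKtil : sn (Ktil j) ≤ k + ε := by
        have : Ktil j = K j + (Ktil j - K j) := by abel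
        rw [this]
        exact le_trans (sn_add_le _ _) (add_le_add le_rfl (hK j))
      calc sn (Ktil j) * ρ ^ s ≤ (k + ε) * 1 :=
          mul_le_mul hKtil hρs (pow_nonneg hρ0 _) (by linarith)
        _ = k + ε := mul_one _
    have hYn : sn Y ≤ k := by
      refine le_trans (sn_mul_pow_le _ _ hFn hρ0 s) ?_
      calc k * ρ ^ s ≤ k * 1 := mul_le_mul_of_nonneg_left hρs hk0
        _ = k := mul_one k
    have hsplit : Xᵀ * Rij j * X - Yᵀ * Rij j * Y = Xᵀ * Rij j * D + Dᵀ * Rij j * Y := by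
      rw [hD, Matrix.transpose_sub, Matrix.mul_sub, Matrix.sub_mul, Matrix.sub_mul]
      abel
    rw [hsplit]
    have h1 : sn (Xᵀ * Rij j * D) ≤ (k + ε) * r * (ε * c) := by
      refine le_trans (sn_mul_le _ _) ?_
      refine mul_le_mul ?_ hDn (sn_nonneg _) (by positivity)
      refine le_trans (sn_mul_le _ _) ?_
      rw [sn_transpose]
      exact mul_le_mul_of_nonneg_right hXn hr0
    have h2 : sn (Dᵀ * Rij j * Y) ≤ (ε * c) * r * k := by
      refine le_trans (sn_mul_le _ _) ?_
      refine mul_le_mul ?_ hYn (sn_nonneg _) (by positivity)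
      refine le_trans (sn_mul_le _ _) ?_
      rw [sn_transpose]
      exact mul_le_mul_of_nonneg_right hDn hr0
    calc sn _ ≤ (k + ε) * r * (ε * c) + (ε * c) * r * k :=
        le_trans (sn_add_le _ _) (add_le_add h1 h2)
      _ = ε ^ 2 * (r * c) + 2 * ε * (r * k * c) := by ring
  calc ∑ j, sn ((Ktil j * Ft ^ s)ᵀ * Rij j * (Ktil j * Ft ^ s)
        - (K j * F ^ s)ᵀ * Rij j * (K j * F ^ s))
      ≤ ∑ j, (ε ^ 2 * (sn (Rij j) * (sn (K j) * b * M + 1))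
        + 2 * ε * (sn (Rij j) * sn (K j) * (sn (K j) * b * M + 1))) :=
        Finset.sum_le_sum fun j _ => key j
    _ = ε ^ 2 * ∑ j, sn (Rij j) * (sn (K j) * b * M + 1)
        + 2 * ε * ∑ j, sn (Rij j) * sn (K j) * (sn (K j) * b * M + 1) := by
        rw [Finset.sum_add_distrib, Finset.mul_sum, Finset.mul_sum]
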